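/- arXiv:2407.12311 — 2 statements merged into one kernel-verified Lean document; each statement's English description precedes it below -/
import Mathlib

section
/- Let {Uⁿ}_{n=0}^N be a CNFD solution. Then the discrete energy is bounded: E_h(Uⁿ) ≤ E_h(U⁰) + (λ²/(4ν)) · ‖U⁰‖²_{2,h} for every n = 0, 1, …, N. -/
noncomputable section

open Finset Complex ComplexConjugate

/-- Membership in the space `X_JK`: complex arrays vanishing on the boundary of the grid. -/
def memX (J K : ℕ) (u : ℕ → ℕ → ℂ) : Prop :=
  (∀ k, u 0 k = 0) ∧ (∀ k, u J k = 0) ∧ (∀ j, u j 0 = 0) ∧ (∀ j, u j K = 0)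

/-- `normP Δx Δy J K p u = ‖u‖_{p,h}^p`. -/
def normP (Δx Δy : ℝ) (J K : ℕ) (p : ℕ) (u : ℕ → ℕ → ℂ) : ℝ :=
  Δx * Δy * ∑ j ∈ range J, ∑ k ∈ range K, ‖u j k‖ ^ p

/-- `gradSq Δx Δy J K u = ‖δ⁺u‖²_{2,h}`. -/
def gradSq (Δx Δy : ℝ) (J K : ℕ) (u : ℕ → ℕ → ℂ) : ℝ :=
  Δx * Δy * ∑ j ∈ range J, ∑ k ∈ range K,
    (‖(u (j + 1) k - u j k) / (Δx : ℂ)‖ ^ 2 +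
      ‖(u j (k + 1) - u j k) / (Δy : ℂ)‖ ^ 2)

/-- The discrete energy `E_h(u)`. -/
def energy (Δx Δy : ℝ) (J K : ℕ) (lam ν : ℝ) (u : ℕ → ℕ → ℂ) : ℝ :=
  gradSq Δx Δy J K u - lam / 2 * normP Δx Δy J K 4 u + ν / 3 * normP Δx Δy J K 6 u

/-- The discrete Laplacian `δ² = δ²_x + δ²_y` (at interior indices). -/
def delta2 (Δx Δy : ℝ) (u : ℕ → ℕ → ℂ) (j k : ℕ) : ℂ :=
  (u (j + 1) k - 2 * u j k + u (j - 1) k) / (Δx : ℂ) ^ 2 +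
    (u j (k + 1) - 2 * u j k + u j (k - 1)) / (Δy : ℂ) ^ 2

/-- `ψ₁(z,w) = ((|z|² + |w|²)/2)·((z+w)/2)`. -/
def psi1 (z w : ℂ) : ℂ :=
  (((‖z‖ ^ 2 + ‖w‖ ^ 2) / 2 : ℝ) : ℂ) * ((z + w) / 2)

/-- `ψ₂(z,w) = ((|z|⁴ + |z|²|w|² + |w|⁴)/3)·((z+w)/2)`. -/
def psi2 (z w : ℂ) : ℂ :=
  (((‖z‖ ^ 4 + ‖z‖ ^ 2 * ‖w‖ ^ 2 + ‖w‖ ^ 4) / 3 : ℝ) : ℂ) *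
    ((z + w) / 2)

/-- `φ(z,w) = |(z+w)/2|²·((z+w)/2)`. -/
def phi (z w : ℂ) : ℂ :=
  ((‖(z + w) / 2‖ ^ 2 : ℝ) : ℂ) * ((z + w) / 2)

/-- One Crank–Nicolson step equation: `W` is the next level, `V` the current one. -/
def stepEq (Δx Δy : ℝ) (J K : ℕ) (lam ν ε τ : ℝ) (W V : ℕ → ℕ → ℂ) : Prop :=
  ∀ j k : ℕ, 1 ≤ j → j ≤ J - 1 → 1 ≤ k → k ≤ K - 1 →
    Complex.I * (W j k - V j k) / (τ : ℂ) +
      delta2 Δx Δy (fun j' k' => (W j' k' + V j' k') / 2) j k +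
      (lam : ℂ) * psi1 (W j k) (V j k) - (ν : ℂ) * psi2 (W j k) (V j k) +
      Complex.I * (ε : ℂ) * phi (W j k) (V j k) = 0

/-- A CNFD solution `U⁰, …, U^N`. -/
def isCNFD (Δx Δy : ℝ) (J K : ℕ) (lam ν ε τ : ℝ) (N : ℕ) (U : ℕ → ℕ → ℕ → ℂ) : Prop :=
  (∀ n, n ≤ N → memX J K (U n)) ∧
    ∀ n, n < N → stepEq Δx Δy J K lam ν ε τ (U (n + 1)) (U n)

/-! ### Auxiliary lemmas -/

lemma sbp1 (f g : ℕ → ℂ) {n : ℕ} (hn : 1 ≤ n) :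
    ∑ j ∈ Finset.Ico 1 n, (f (j+1) - 2*f j + f (j-1)) * g j
      = -(∑ j ∈ Finset.range n, (f (j+1) - f j) * (g (j+1) - g j))
        - (f 1 - f 0) * g 0 + (f n - f (n-1)) * g n := by
  induction n, hn using Nat.le_induction with
  | base => simp; ring
  | succ n hn ih =>
    rw [Finset.sum_Ico_succ_top hn, Finset.sum_range_succ, ih]
    have h1 : n + 1 - 1 = n := rfl
    rw [h1]
    ring

lemma sbp1' (f g : ℕ → ℂ) {n : ℕ} (hn : 1 ≤ n) (hg0 : g 0 = 0) (hgn : g n = 0) :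
    ∑ j ∈ Finset.Ico 1 n, (f (j+1) - 2*f j + f (j-1)) * g j
      = -(∑ j ∈ Finset.range n, (f (j+1) - f j) * (g (j+1) - g j)) := by
  rw [sbp1 f g hn, hg0, hgn]; ring

lemma sum_Ico_one {M : Type*} [AddCommMonoid M] (n : ℕ) (f : ℕ → M) (h : f 0 = 0) :
    ∑ j ∈ Finset.Ico 1 n, f j = ∑ j ∈ Finset.range n, f j := by
  rw [Finset.range_eq_Ico]
  apply Finset.sum_subset (Finset.Ico_subset_Ico (Nat.zero_le 1) le_rfl)
  intro x hx hnx
  simp only [Finset.mem_Ico] at hx hnx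
  have : x = 0 := by omega
  rw [this, h]

lemma interior_sum {M : Type*} [AddCommMonoid M] (J K : ℕ) (F : ℕ → ℕ → M)
    (h0 : ∀ k, F 0 k = 0) (h0' : ∀ j, F j 0 = 0) :
    ∑ j ∈ Finset.range J, ∑ k ∈ Finset.range K, F j k
      = ∑ j ∈ Finset.Ico 1 J, ∑ k ∈ Finset.Ico 1 K, F j k := by
  rw [← sum_Ico_one J _ (by simp [h0])]
  exact Finset.sum_congr rfl fun j _ => (sum_Ico_one K _ (h0' j)).symm

lemma sbp2 (Δx Δy : ℝ) (J K : ℕ) (hJ : 1 ≤ J) (hK : 1 ≤ K)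
    (u g : ℕ → ℕ → ℂ) (hu : memX J K u) (hg : memX J K g) :
    ∑ j ∈ Finset.Ico 1 J, ∑ k ∈ Finset.Ico 1 K, delta2 Δx Δy u j k * conj (g j k)
      = -∑ j ∈ Finset.range J, ∑ k ∈ Finset.range K,
          ((u (j+1) k - u j k) * conj (g (j+1) k - g j k) / (Δx:ℂ)^2
            + (u j (k+1) - u j k) * conj (g j (k+1) - g j k) / (Δy:ℂ)^2) := by
  obtain ⟨hu0, huJ, hu0', huK⟩ := hu
  obtain ⟨hg0, hgJ, hg0', hgK⟩ := hg
  have hsplit : ∀ j k : ℕ, delta2 Δx Δy u j k * conj (g j k)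
      = (u (j+1) k - 2*u j k + u (j-1) k) * (conj (g j k) / (Δx:ℂ)^2)
        + (u j (k+1) - 2*u j k + u j (k-1)) * (conj (g j k) / (Δy:ℂ)^2) := by
    intro j k; simp only [delta2]; ring
  have hX : ∑ j ∈ Finset.Ico 1 J, ∑ k ∈ Finset.Ico 1 K,
        (u (j+1) k - 2*u j k + u (j-1) k) * (conj (g j k) / (Δx:ℂ)^2)
      = -∑ j ∈ Finset.range J, ∑ k ∈ Finset.range K,
          (u (j+1) k - u j k) * conj (g (j+1) k - g j k) / (Δx:ℂ)^2 := by
    rw [Finset.sum_comm]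
    have inner : ∀ k ∈ Finset.Ico 1 K, ∑ j ∈ Finset.Ico 1 J,
          (u (j+1) k - 2*u j k + u (j-1) k) * (conj (g j k) / (Δx:ℂ)^2)
        = -∑ j ∈ Finset.range J,
            (u (j+1) k - u j k) * conj (g (j+1) k - g j k) / (Δx:ℂ)^2 := by
      intro k _
      rw [sbp1' (fun j => u j k) (fun j => conj (g j k) / (Δx:ℂ)^2) hJ
        (by simp [hg0]) (by simp [hgJ])]
      congr 1
      apply Finset.sum_congr rfl
      intro j _
      rw [map_sub]
      ring
    rw [Finset.sum_congr rfl inner,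
      sum_Ico_one K _ (by rw [neg_eq_zero]; exact Finset.sum_eq_zero fun j _ => by simp [hu0']),
      Finset.sum_neg_distrib, Finset.sum_comm]
  have hY : ∑ j ∈ Finset.Ico 1 J, ∑ k ∈ Finset.Ico 1 K,
        (u j (k+1) - 2*u j k + u j (k-1)) * (conj (g j k) / (Δy:ℂ)^2)
      = -∑ j ∈ Finset.range J, ∑ k ∈ Finset.range K,
          (u j (k+1) - u j k) * conj (g j (k+1) - g j k) / (Δy:ℂ)^2 := by
    have inner : ∀ j ∈ Finset.Ico 1 J, ∑ k ∈ Finset.Ico 1 K,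
          (u j (k+1) - 2*u j k + u j (k-1)) * (conj (g j k) / (Δy:ℂ)^2)
        = -∑ k ∈ Finset.range K,
            (u j (k+1) - u j k) * conj (g j (k+1) - g j k) / (Δy:ℂ)^2 := by
      intro j _
      rw [sbp1' (fun k => u j k) (fun k => conj (g j k) / (Δy:ℂ)^2) hK
        (by simp [hg0']) (by simp [hgK])]
      congr 1
      apply Finset.sum_congr rfl
      intro k _
      rw [map_sub]
      ring
    rw [Finset.sum_congr rfl inner,
      sum_Ico_one J _ (by rw [neg_eq_zero]; exact Finset.sum_eq_zero fun k _ => by simp [hu0]),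
      Finset.sum_neg_distrib]
  calc ∑ j ∈ Finset.Ico 1 J, ∑ k ∈ Finset.Ico 1 K, delta2 Δx Δy u j k * conj (g j k)
      = (∑ j ∈ Finset.Ico 1 J, ∑ k ∈ Finset.Ico 1 K,
          (u (j+1) k - 2*u j k + u (j-1) k) * (conj (g j k) / (Δx:ℂ)^2))
        + ∑ j ∈ Finset.Ico 1 J, ∑ k ∈ Finset.Ico 1 K,
          (u j (k+1) - 2*u j k + u j (k-1)) * (conj (g j k) / (Δy:ℂ)^2) := by
        rw [← Finset.sum_add_distrib]
        apply Finset.sum_congr rfl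
        intro j _
        rw [← Finset.sum_add_distrib]
        exact Finset.sum_congr rfl fun k _ => hsplit j k
    _ = -∑ j ∈ Finset.range J, ∑ k ∈ Finset.range K,
          ((u (j+1) k - u j k) * conj (g (j+1) k - g j k) / (Δx:ℂ)^2
            + (u j (k+1) - u j k) * conj (g j (k+1) - g j k) / (Δy:ℂ)^2) := by
        rw [hX, hY]
        rw [← neg_add, ← Finset.sum_add_distrib]
        congr 1
        apply Finset.sum_congr rfl
        intro j _
        rw [← Finset.sum_add_distrib]

lemma e4 (z : ℂ) : ‖z‖ ^ 4 = Complex.normSq z ^ 2 := by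
  rw [show (4:ℕ) = 2*2 from rfl, pow_mul, Complex.sq_norm]

set_option maxHeartbeats 1000000 in
lemma point_re_m (lam ν ε τ : ℝ) (z w D : ℂ)
    (h : Complex.I * (z - w) + (τ:ℂ) * D + (τ:ℂ) * ((lam:ℂ) * psi1 z w)
      - (τ:ℂ) * ((ν:ℂ) * psi2 z w) + (τ:ℂ) * (Complex.I * (ε:ℂ) * phi z w) = 0) :
    τ * (D * conj ((z + w)/2)).re
      = ((z - w) * conj ((z + w)/2)).im
        - τ * ((lam * ((‖z‖^2 + ‖w‖^2)/2)
            - ν * ((‖z‖^4 + ‖z‖^2 * ‖w‖^2 + ‖w‖^4)/3))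
          * ‖(z + w)/2‖^2) := by
  have h3 := congrArg (fun y => (y * conj ((z + w)/2)).re) h
  simp only [psi1, psi2, phi, e4, Complex.sq_norm, Complex.normSq_apply] at h3 ⊢
  simp only [Complex.mul_re, Complex.mul_im, Complex.add_re, Complex.add_im, Complex.sub_re,
    Complex.sub_im, Complex.ofReal_re, Complex.ofReal_im, Complex.I_re, Complex.I_im,
    Complex.conj_re, Complex.conj_im, Complex.div_re, Complex.div_im, Complex.normSq_apply,
    Complex.zero_re, Complex.zero_im, Complex.re_ofNat, Complex.im_ofNat, zero_mul,
    mul_zero] at h3 ⊢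
  ring_nf at h3 ⊢
  linarith [h3]

set_option maxHeartbeats 1000000 in
lemma point_im_m (lam ν ε τ : ℝ) (z w D : ℂ)
    (h : Complex.I * (z - w) + (τ:ℂ) * D + (τ:ℂ) * ((lam:ℂ) * psi1 z w)
      - (τ:ℂ) * ((ν:ℂ) * psi2 z w) + (τ:ℂ) * (Complex.I * (ε:ℂ) * phi z w) = 0) :
    τ * (D * conj ((z + w)/2)).im
      = -((z - w) * conj ((z + w)/2)).re - τ * (ε * (‖(z + w)/2‖^2)^2) := by
  have h3 := congrArg (fun y => (y * conj ((z + w)/2)).im) h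
  simp only [psi1, psi2, phi, e4, Complex.sq_norm, Complex.normSq_apply] at h3 ⊢
  simp only [Complex.mul_re, Complex.mul_im, Complex.add_re, Complex.add_im, Complex.sub_re,
    Complex.sub_im, Complex.ofReal_re, Complex.ofReal_im, Complex.I_re, Complex.I_im,
    Complex.conj_re, Complex.conj_im, Complex.div_re, Complex.div_im, Complex.normSq_apply,
    Complex.zero_re, Complex.zero_im, Complex.re_ofNat, Complex.im_ofNat, zero_mul,
    mul_zero] at h3 ⊢
  ring_nf at h3 ⊢
  linarith [h3]

set_option maxHeartbeats 1000000 in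
lemma point_re_d (lam ν ε τ : ℝ) (z w D : ℂ)
    (h : Complex.I * (z - w) + (τ:ℂ) * D + (τ:ℂ) * ((lam:ℂ) * psi1 z w)
      - (τ:ℂ) * ((ν:ℂ) * psi2 z w) + (τ:ℂ) * (Complex.I * (ε:ℂ) * phi z w) = 0) :
    τ * (D * conj (z - w)).re
      = τ * (-((lam * ((‖z‖^2 + ‖w‖^2)/2)
            - ν * ((‖z‖^4 + ‖z‖^2 * ‖w‖^2 + ‖w‖^4)/3))
          * ((‖z‖^2 - ‖w‖^2)/2))
        - ε * ‖(z + w)/2‖^2 * ((z - w) * conj ((z + w)/2)).im) := by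
  have h3 := congrArg (fun y => (y * conj (z - w)).re) h
  simp only [psi1, psi2, phi, e4, Complex.sq_norm, Complex.normSq_apply] at h3 ⊢
  simp only [Complex.mul_re, Complex.mul_im, Complex.add_re, Complex.add_im, Complex.sub_re,
    Complex.sub_im, Complex.ofReal_re, Complex.ofReal_im, Complex.I_re, Complex.I_im,
    Complex.conj_re, Complex.conj_im, Complex.div_re, Complex.div_im, Complex.normSq_apply,
    Complex.zero_re, Complex.zero_im, Complex.re_ofNat, Complex.im_ofNat, zero_mul,
    mul_zero] at h3 ⊢
  ring_nf at h3 ⊢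
  linarith [h3]

lemma half_diff_re (p q : ℂ) :
    ((p - q) * conj ((p + q)/2)).re = (‖p‖^2 - ‖q‖^2)/2 := by
  simp only [Complex.sq_norm, Complex.normSq_apply, Complex.mul_re, Complex.sub_re,
    Complex.sub_im, Complex.add_re, Complex.add_im, Complex.conj_re, Complex.conj_im,
    Complex.div_re, Complex.div_im, Complex.normSq_apply, Complex.re_ofNat, Complex.im_ofNat]
  ring

lemma half_diff_re' (p q : ℂ) :
    (((p + q)/2) * conj (p - q)).re = (‖p‖^2 - ‖q‖^2)/2 := by
  simp only [Complex.sq_norm, Complex.normSq_apply, Complex.mul_re, Complex.sub_re,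
    Complex.sub_im, Complex.add_re, Complex.add_im, Complex.conj_re, Complex.conj_im,
    Complex.div_re, Complex.div_im, Complex.normSq_apply, Complex.re_ofNat, Complex.im_ofNat]
  ring

lemma re_div_sq (Δ : ℝ) (z : ℂ) : (z / (Δ:ℂ)^2).re = z.re / Δ^2 := by
  rw [show ((Δ:ℂ))^2 = ((Δ^2 : ℝ) : ℂ) by push_cast; ring, Complex.div_ofReal_re]

lemma im_div_sq (Δ : ℝ) (z : ℂ) : (z / (Δ:ℂ)^2).im = z.im / Δ^2 := by
  rw [show ((Δ:ℂ))^2 = ((Δ^2 : ℝ) : ℂ) by push_cast; ring, Complex.div_ofReal_im]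

lemma abs_div_sq (Δ : ℝ) (z : ℂ) :
    ‖z / (Δ:ℂ)‖^2 = ‖z‖^2 / Δ^2 := by
  rw [norm_div, div_pow, Complex.norm_real, Real.norm_eq_abs, _root_.sq_abs]

lemma term_sd (Δ : ℝ) (w1 w0 v1 v0 : ℂ) :
    (((w1 + v1)/2 - (w0 + v0)/2) * conj ((w1 - v1) - (w0 - v0)) / (Δ:ℂ)^2).re
      = (‖(w1 - w0)/(Δ:ℂ)‖^2 - ‖(v1 - v0)/(Δ:ℂ)‖^2)/2 := by
  rw [re_div_sq, abs_div_sq, abs_div_sq,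
    show ((w1 + v1)/2 - (w0 + v0)/2) * conj ((w1 - v1) - (w0 - v0))
      = ((w1 - w0) + (v1 - v0))/2 * conj ((w1 - w0) - (v1 - v0)) by
        rw [show ((w1 - v1) - (w0 - v0)) = ((w1 - w0) - (v1 - v0)) by ring]
        ring,
    half_diff_re']
  ring

lemma term_self_im (Δ : ℝ) (z : ℂ) : (z * conj z / (Δ:ℂ)^2).im = 0 := by
  rw [im_div_sq, Complex.mul_conj]
  simp

lemma mono_re (a b : ℂ) :
    0 ≤ ((b - a) * conj (b * ((‖b‖ ^ 2 : ℝ) : ℂ) - a * ((‖a‖ ^ 2 : ℝ) : ℂ))).re := by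
  have h1 : ((b - a) * conj (b * ((‖b‖ ^ 2 : ℝ) : ℂ) - a * ((‖a‖ ^ 2 : ℝ) : ℂ))).re
      = ‖b‖ ^2 * ‖b‖^2 + ‖a‖^2 * ‖a‖^2
        - (a * conj b).re * (‖a‖^2 + ‖b‖^2) := by
    simp only [Complex.sq_norm, Complex.normSq_apply, Complex.mul_re, Complex.mul_im,
      Complex.sub_re, Complex.sub_im, Complex.conj_re, Complex.conj_im, Complex.ofReal_re,
      Complex.ofReal_im]
    ring
  rw [h1]
  have hab : (a * conj b).re ≤ ‖a‖ * ‖b‖ := by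
    calc (a * conj b).re ≤ ‖a * conj b‖ := Complex.re_le_norm _
    _ = ‖a‖ * ‖b‖ := by rw [norm_mul, Complex.norm_conj]
  have ha := norm_nonneg a
  have hb := norm_nonneg b
  nlinarith [sq_nonneg (‖a‖ - ‖b‖), sq_nonneg (‖a‖ + ‖b‖),
    mul_nonneg ha hb, sq_nonneg (‖a‖ * ‖b‖ - 1)]

lemma quad_bound (lam ν : ℝ) (hν : 0 < ν) (s t : ℝ) :
    lam * ((s + t)/2) - ν * ((s^2 + s*t + t^2)/3) ≤ lam^2/(4*ν) := by
  have key : ((s+t)/2)^2 ≤ (s^2+s*t+t^2)/3 := by nlinarith [sq_nonneg (s - t)]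
  rw [le_div_iff₀ (by linarith : (0:ℝ) < 4*ν)]
  have key2 : 4*ν^2*((s+t)/2)^2 ≤ 4*ν^2*((s^2+s*t+t^2)/3) :=
    mul_le_mul_of_nonneg_left key (by positivity)
  nlinarith [key2, sq_nonneg (lam - 2*ν*((s+t)/2))]

lemma dsum_linear (s t : Finset ℕ) (a b : ℝ) (F G : ℕ → ℕ → ℝ) :
    ∑ j ∈ s, ∑ k ∈ t, (a * F j k + b * G j k)
      = a * (∑ j ∈ s, ∑ k ∈ t, F j k) + b * (∑ j ∈ s, ∑ k ∈ t, G j k) := by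
  simp [Finset.sum_add_distrib, Finset.mul_sum]

lemma dsum_linear3 (s t : Finset ℕ) (a b c : ℝ) (F G H : ℕ → ℕ → ℝ) :
    ∑ j ∈ s, ∑ k ∈ t, ((a * F j k + b * G j k) + c * H j k)
      = a * (∑ j ∈ s, ∑ k ∈ t, F j k) + b * (∑ j ∈ s, ∑ k ∈ t, G j k)
        + c * (∑ j ∈ s, ∑ k ∈ t, H j k) := by
  simp [Finset.sum_add_distrib, Finset.mul_sum, mul_add]

lemma dsum_mul (s t : Finset ℕ) (a : ℝ) (F : ℕ → ℕ → ℝ) :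
    ∑ j ∈ s, ∑ k ∈ t, a * F j k = a * ∑ j ∈ s, ∑ k ∈ t, F j k := by
  simp [Finset.mul_sum]

lemma dsum_sub (s t : Finset ℕ) (F G : ℕ → ℕ → ℝ) :
    ∑ j ∈ s, ∑ k ∈ t, (F j k - G j k)
      = ∑ j ∈ s, ∑ k ∈ t, F j k - ∑ j ∈ s, ∑ k ∈ t, G j k := by
  simp [Finset.sum_sub_distrib]

set_option maxHeartbeats 2000000 in
lemma key (Δx Δy : ℝ) (hΔx : 0 < Δx) (hΔy : 0 < Δy) (J K : ℕ) (hJ : 2 ≤ J) (hK : 2 ≤ K)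
    (lam ν ε τ : ℝ) (hν : 0 < ν) (hε : 0 ≤ ε) (hτ : 0 < τ)
    (w v : ℕ → ℕ → ℂ) (hw : memX J K w) (hv : memX J K v)
    (heq : stepEq Δx Δy J K lam ν ε τ w v) :
    energy Δx Δy J K lam ν w + lam^2/(4*ν) * normP Δx Δy J K 2 w
      ≤ energy Δx Δy J K lam ν v + lam^2/(4*ν) * normP Δx Δy J K 2 v := by
  have hJ1 : 1 ≤ J := by omega
  have hK1 : 1 ≤ K := by omega
  have hτ0 : τ ≠ 0 := ne_of_gt hτ
  set m : ℕ → ℕ → ℂ := fun j k => (w j k + v j k) / 2 with hm_def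
  set g : ℕ → ℕ → ℂ := fun j k => m j k * ((‖m j k‖ ^ 2 : ℝ) : ℂ) with hg_def
  have hmX : memX J K m := by
    refine ⟨fun k => ?_, fun k => ?_, fun j => ?_, fun j => ?_⟩ <;>
      simp [hm_def, hw.1, hw.2.1, hw.2.2.1, hw.2.2.2, hv.1, hv.2.1, hv.2.2.1, hv.2.2.2]
  have hgX : memX J K g := by
    refine ⟨fun k => ?_, fun k => ?_, fun j => ?_, fun j => ?_⟩ <;>
      simp [hg_def, hmX.1, hmX.2.1, hmX.2.2.1, hmX.2.2.2]
  have hdX : memX J K (fun j k => w j k - v j k) := by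
    refine ⟨fun k => ?_, fun k => ?_, fun j => ?_, fun j => ?_⟩ <;>
      simp [hw.1, hw.2.1, hw.2.2.1, hw.2.2.2, hv.1, hv.2.1, hv.2.2.1, hv.2.2.2]
  have heq' : ∀ j ∈ Finset.Ico 1 J, ∀ k ∈ Finset.Ico 1 K,
      Complex.I * (w j k - v j k) + (τ:ℂ) * delta2 Δx Δy m j k
        + (τ:ℂ) * ((lam:ℂ) * psi1 (w j k) (v j k))
        - (τ:ℂ) * ((ν:ℂ) * psi2 (w j k) (v j k))
        + (τ:ℂ) * (Complex.I * (ε:ℂ) * phi (w j k) (v j k)) = 0 := by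
    intro j hj k hk
    simp only [Finset.mem_Ico] at hj hk
    have h := heq j k hj.1 (by omega) hk.1 (by omega)
    rw [← hm_def] at h
    have hτ' : (τ:ℂ) ≠ 0 := Complex.ofReal_ne_zero.mpr hτ0
    field_simp at h
    linear_combination h
  have hmjk : ∀ j k : ℕ, (w j k + v j k)/2 = m j k := fun j k => by rw [hm_def]
  -- pointwise identities
  have pt1 : ∀ j ∈ Finset.Ico 1 J, ∀ k ∈ Finset.Ico 1 K,
      τ * (delta2 Δx Δy m j k * conj (m j k)).re
        = ((w j k - v j k) * conj (m j k)).im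
          - τ * ((lam * ((‖w j k‖^2 + ‖v j k‖^2)/2)
              - ν * ((‖w j k‖^4 + ‖w j k‖^2 * ‖v j k‖^2
                  + ‖v j k‖^4)/3)) * ‖m j k‖^2) := by
    intro j hj k hk
    have h := point_re_m lam ν ε τ (w j k) (v j k) (delta2 Δx Δy m j k) (heq' j hj k hk)
    rw [hmjk j k] at h
    exact h
  have pt2 : ∀ j ∈ Finset.Ico 1 J, ∀ k ∈ Finset.Ico 1 K,
      τ * (delta2 Δx Δy m j k * conj (m j k)).im
        = -((w j k - v j k) * conj (m j k)).re - τ * (ε * (‖m j k‖^2)^2) := by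
    intro j hj k hk
    have h := point_im_m lam ν ε τ (w j k) (v j k) (delta2 Δx Δy m j k) (heq' j hj k hk)
    rw [hmjk j k] at h
    exact h
  have pt3 : ∀ j ∈ Finset.Ico 1 J, ∀ k ∈ Finset.Ico 1 K,
      τ * (delta2 Δx Δy m j k * conj (w j k - v j k)).re
        = τ * (-((lam * ((‖w j k‖^2 + ‖v j k‖^2)/2)
              - ν * ((‖w j k‖^4 + ‖w j k‖^2 * ‖v j k‖^2
                  + ‖v j k‖^4)/3))
            * ((‖w j k‖^2 - ‖v j k‖^2)/2))
          - ε * ‖m j k‖^2 * ((w j k - v j k) * conj (m j k)).im) := by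
    intro j hj k hk
    have h := point_re_d lam ν ε τ (w j k) (v j k) (delta2 Δx Δy m j k) (heq' j hj k hk)
    rw [hmjk j k] at h
    exact h
  -- the vanishing of the imaginary part of ⟨δ²m, m⟩
  have hIm0 : ∑ j ∈ Finset.Ico 1 J, ∑ k ∈ Finset.Ico 1 K,
      (delta2 Δx Δy m j k * conj (m j k)).im = 0 := by
    have h := congrArg Complex.im (sbp2 Δx Δy J K hJ1 hK1 m m hmX hmX)
    simp only [Complex.im_sum, Complex.neg_im, Complex.add_im, term_self_im, add_zero,
      Finset.sum_const_zero, neg_zero] at h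
    exact h
  -- mass identity
  have hmass0 : ∑ j ∈ Finset.Ico 1 J, ∑ k ∈ Finset.Ico 1 K,
      ((w j k - v j k) * conj (m j k)).re
    = ∑ j ∈ Finset.Ico 1 J, ∑ k ∈ Finset.Ico 1 K,
        ((-τ) * (delta2 Δx Δy m j k * conj (m j k)).im
          + (-(τ*ε)) * (‖m j k‖^2)^2) := by
    refine Finset.sum_congr rfl fun j hj => Finset.sum_congr rfl fun k hk => ?_
    have := pt2 j hj k hk
    linarith
  have hmass : ∑ j ∈ Finset.Ico 1 J, ∑ k ∈ Finset.Ico 1 K, ((w j k - v j k) * conj (m j k)).re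
      = -(τ*ε) * ∑ j ∈ Finset.Ico 1 J, ∑ k ∈ Finset.Ico 1 K, (‖m j k‖^2)^2 := by
    rw [hmass0, dsum_linear, hIm0]
    ring
  have hhalf : ∀ j k : ℕ, ((w j k - v j k) * conj (m j k)).re
      = (‖w j k‖^2 - ‖v j k‖^2)/2 := by
    intro j k
    rw [← hmjk j k]
    exact half_diff_re (w j k) (v j k)
  have hP2raw : (∑ j ∈ range J, ∑ k ∈ range K, ‖w j k‖^2)
      - (∑ j ∈ range J, ∑ k ∈ range K, ‖v j k‖^2)
      = 2 * (-(τ*ε) * ∑ j ∈ Finset.Ico 1 J, ∑ k ∈ Finset.Ico 1 K,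
          (‖m j k‖^2)^2) := by
    rw [← hmass, ← dsum_sub]
    rw [interior_sum J K (fun j k => ‖w j k‖^2 - ‖v j k‖^2)
      (fun k => by simp [hw.1, hv.1]) (fun j => by simp [hw.2.2.1, hv.2.2.1])]
    rw [Finset.mul_sum]
    refine Finset.sum_congr rfl fun j _ => ?_
    rw [Finset.mul_sum]
    refine Finset.sum_congr rfl fun k _ => ?_
    rw [hhalf j k]
    ring
  -- energy identity part (a) : the SBP evaluation of Re⟨δ²m, d⟩
  have hSDre : ∑ j ∈ Finset.Ico 1 J, ∑ k ∈ Finset.Ico 1 K,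
      (delta2 Δx Δy m j k * conj (w j k - v j k)).re
      = -((1/2) * (∑ j ∈ range J, ∑ k ∈ range K,
            (‖(w (j+1) k - w j k)/(Δx:ℂ)‖^2
              + ‖(w j (k+1) - w j k)/(Δy:ℂ)‖^2))
        + (-(1/2)) * (∑ j ∈ range J, ∑ k ∈ range K,
            (‖(v (j+1) k - v j k)/(Δx:ℂ)‖^2
              + ‖(v j (k+1) - v j k)/(Δy:ℂ)‖^2))) := by
    have h := congrArg Complex.re (sbp2 Δx Δy J K hJ1 hK1 m
      (fun j k => w j k - v j k) hmX hdX)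
    simp only [Complex.re_sum, Complex.neg_re, Complex.add_re] at h
    rw [h]
    congr 1
    rw [← dsum_linear]
    refine Finset.sum_congr rfl fun j _ => Finset.sum_congr rfl fun k _ => ?_
    have e1 := term_sd Δx (w (j+1) k) (w j k) (v (j+1) k) (v j k)
    have e2 := term_sd Δy (w j (k+1)) (w j k) (v j (k+1)) (v j k)
    rw [hmjk (j+1) k, hmjk j k] at e1
    rw [hmjk j (k+1), hmjk j k] at e2
    rw [e1, e2]
    ring
  -- energy identity part (b) : pointwise evaluation summed, with τ cancelled
  have h3a : ∑ j ∈ Finset.Ico 1 J, ∑ k ∈ Finset.Ico 1 K,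
      (τ * (delta2 Δx Δy m j k * conj (w j k - v j k)).re)
      = ∑ j ∈ Finset.Ico 1 J, ∑ k ∈ Finset.Ico 1 K,
        (τ * (-((lam * ((‖w j k‖^2 + ‖v j k‖^2)/2)
              - ν * ((‖w j k‖^4 + ‖w j k‖^2 * ‖v j k‖^2
                  + ‖v j k‖^4)/3))
            * ((‖w j k‖^2 - ‖v j k‖^2)/2))
          - ε * ‖m j k‖^2 * ((w j k - v j k) * conj (m j k)).im)) :=
    Finset.sum_congr rfl fun j hj => Finset.sum_congr rfl fun k hk => pt3 j hj k hk
  rw [dsum_mul, dsum_mul] at h3a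
  have h3b := mul_left_cancel₀ hτ0 h3a
  have h3c : ∑ j ∈ Finset.Ico 1 J, ∑ k ∈ Finset.Ico 1 K,
      (-((lam * ((‖w j k‖^2 + ‖v j k‖^2)/2)
              - ν * ((‖w j k‖^4 + ‖w j k‖^2 * ‖v j k‖^2
                  + ‖v j k‖^4)/3))
            * ((‖w j k‖^2 - ‖v j k‖^2)/2))
          - ε * ‖m j k‖^2 * ((w j k - v j k) * conj (m j k)).im)
      = (-(lam/4)) * (∑ j ∈ Finset.Ico 1 J, ∑ k ∈ Finset.Ico 1 K,
            (‖w j k‖^4 - ‖v j k‖^4))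
        + (ν/6) * (∑ j ∈ Finset.Ico 1 J, ∑ k ∈ Finset.Ico 1 K,
            (‖w j k‖^6 - ‖v j k‖^6))
        + (-ε) * (∑ j ∈ Finset.Ico 1 J, ∑ k ∈ Finset.Ico 1 K,
            ‖m j k‖^2 * ((w j k - v j k) * conj (m j k)).im) := by
    have expand : ∀ j k : ℕ,
        (-((lam * ((‖w j k‖^2 + ‖v j k‖^2)/2)
              - ν * ((‖w j k‖^4 + ‖w j k‖^2 * ‖v j k‖^2
                  + ‖v j k‖^4)/3))
            * ((‖w j k‖^2 - ‖v j k‖^2)/2))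
          - ε * ‖m j k‖^2 * ((w j k - v j k) * conj (m j k)).im)
        = ((-(lam/4)) * (‖w j k‖^4 - ‖v j k‖^4)
            + (ν/6) * (‖w j k‖^6 - ‖v j k‖^6))
          + (-ε) * (‖m j k‖^2 * ((w j k - v j k) * conj (m j k)).im) := by
      intro j k; ring
    rw [Finset.sum_congr rfl fun j _ => Finset.sum_congr rfl fun k _ => expand j k]
    rw [show (∑ j ∈ Finset.Ico 1 J, ∑ k ∈ Finset.Ico 1 K,
        (((-(lam/4)) * (‖w j k‖^4 - ‖v j k‖^4)
            + (ν/6) * (‖w j k‖^6 - ‖v j k‖^6))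
          + (-ε) * (‖m j k‖^2 * ((w j k - v j k) * conj (m j k)).im)))
      = (-(lam/4)) * (∑ j ∈ Finset.Ico 1 J, ∑ k ∈ Finset.Ico 1 K,
            (‖w j k‖^4 - ‖v j k‖^4))
        + (ν/6) * (∑ j ∈ Finset.Ico 1 J, ∑ k ∈ Finset.Ico 1 K,
            (‖w j k‖^6 - ‖v j k‖^6))
        + (-ε) * (∑ j ∈ Finset.Ico 1 J, ∑ k ∈ Finset.Ico 1 K,
            ‖m j k‖^2 * ((w j k - v j k) * conj (m j k)).im)
      from dsum_linear3 _ _ _ _ _ _ _ _]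
  -- interior sums of the power differences equal full range sums
  have hi4 : ∑ j ∈ Finset.Ico 1 J, ∑ k ∈ Finset.Ico 1 K,
      (‖w j k‖^4 - ‖v j k‖^4)
      = (∑ j ∈ range J, ∑ k ∈ range K, ‖w j k‖^4)
        - (∑ j ∈ range J, ∑ k ∈ range K, ‖v j k‖^4) := by
    rw [← dsum_sub, interior_sum J K (fun j k => ‖w j k‖^4 - ‖v j k‖^4)
      (fun k => by simp [hw.1, hv.1]) (fun j => by simp [hw.2.2.1, hv.2.2.1])]
  have hi6 : ∑ j ∈ Finset.Ico 1 J, ∑ k ∈ Finset.Ico 1 K,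
      (‖w j k‖^6 - ‖v j k‖^6)
      = (∑ j ∈ range J, ∑ k ∈ range K, ‖w j k‖^6)
        - (∑ j ∈ range J, ∑ k ∈ range K, ‖v j k‖^6) := by
    rw [← dsum_sub, interior_sum J K (fun j k => ‖w j k‖^6 - ‖v j k‖^6)
      (fun k => by simp [hw.1, hv.1]) (fun j => by simp [hw.2.2.1, hv.2.2.1])]
  -- the energy identity
  have hE : energy Δx Δy J K lam ν w - energy Δx Δy J K lam ν v
      = 2*ε*(Δx*Δy) * (∑ j ∈ Finset.Ico 1 J, ∑ k ∈ Finset.Ico 1 K,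
          ‖m j k‖^2 * ((w j k - v j k) * conj (m j k)).im) := by
    rw [h3c, hi4, hi6] at h3b
    simp only [energy, gradSq, normP]
    linear_combination (-2*(Δx*Δy)) * h3b + (2*(Δx*Δy)) * hSDre
  -- weighted sum with |m|² weight
  have hgpoint : ∀ j k : ℕ, (delta2 Δx Δy m j k * conj (g j k)).re
      = (delta2 Δx Δy m j k * conj (m j k)).re * ‖m j k‖^2 := by
    intro j k
    have hge : g j k = m j k * ((‖m j k‖^2 : ℝ) : ℂ) := by rw [hg_def]
    rw [hge, map_mul, Complex.conj_ofReal, ← mul_assoc, Complex.re_mul_ofReal]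
  have hApt : ∀ j ∈ Finset.Ico 1 J, ∀ k ∈ Finset.Ico 1 K,
      ‖m j k‖^2 * ((w j k - v j k) * conj (m j k)).im
        = τ * (delta2 Δx Δy m j k * conj (g j k)).re
          + τ * ((lam * ((‖w j k‖^2 + ‖v j k‖^2)/2)
              - ν * ((‖w j k‖^4 + ‖w j k‖^2 * ‖v j k‖^2
                  + ‖v j k‖^4)/3)) * (‖m j k‖^2)^2) := by
    intro j hj k hk
    have h1 := pt1 j hj k hk
    have h2 := hgpoint j k
    nlinarith [h1, h2]
  have hA : ∑ j ∈ Finset.Ico 1 J, ∑ k ∈ Finset.Ico 1 K,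
      ‖m j k‖^2 * ((w j k - v j k) * conj (m j k)).im
    = τ * (∑ j ∈ Finset.Ico 1 J, ∑ k ∈ Finset.Ico 1 K,
          (delta2 Δx Δy m j k * conj (g j k)).re)
      + τ * (∑ j ∈ Finset.Ico 1 J, ∑ k ∈ Finset.Ico 1 K,
          ((lam * ((‖w j k‖^2 + ‖v j k‖^2)/2)
              - ν * ((‖w j k‖^4 + ‖w j k‖^2 * ‖v j k‖^2
                  + ‖v j k‖^4)/3)) * (‖m j k‖^2)^2)) := by
    rw [Finset.sum_congr rfl fun j hj => Finset.sum_congr rfl fun k hk => hApt j hj k hk]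
    exact dsum_linear _ _ _ _ _ _
  -- the weighted SBP sum is nonpositive
  have hSGle : ∑ j ∈ Finset.Ico 1 J, ∑ k ∈ Finset.Ico 1 K,
      (delta2 Δx Δy m j k * conj (g j k)).re ≤ 0 := by
    have h := congrArg Complex.re (sbp2 Δx Δy J K hJ1 hK1 m g hmX hgX)
    simp only [Complex.re_sum, Complex.neg_re, Complex.add_re] at h
    rw [h, neg_nonpos]
    refine Finset.sum_nonneg fun j _ => Finset.sum_nonneg fun k _ => add_nonneg ?_ ?_
    · rw [re_div_sq]
      apply div_nonneg _ (sq_nonneg Δx)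
      have hgx : g (j+1) k - g j k
          = m (j+1) k * ((‖m (j+1) k‖^2 : ℝ) : ℂ)
            - m j k * ((‖m j k‖^2 : ℝ) : ℂ) := by rw [hg_def]
      rw [hgx]
      exact mono_re (m j k) (m (j+1) k)
    · rw [re_div_sq]
      apply div_nonneg _ (sq_nonneg Δy)
      have hgy : g j (k+1) - g j k
          = m j (k+1) * ((‖m j (k+1)‖^2 : ℝ) : ℂ)
            - m j k * ((‖m j k‖^2 : ℝ) : ℂ) := by rw [hg_def]
      rw [hgy]
      exact mono_re (m j k) (m j (k+1))
  -- the quadratic bound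
  have hC2le : ∑ j ∈ Finset.Ico 1 J, ∑ k ∈ Finset.Ico 1 K,
      ((lam * ((‖w j k‖^2 + ‖v j k‖^2)/2)
          - ν * ((‖w j k‖^4 + ‖w j k‖^2 * ‖v j k‖^2
              + ‖v j k‖^4)/3)) * (‖m j k‖^2)^2)
      ≤ lam^2/(4*ν) * ∑ j ∈ Finset.Ico 1 J, ∑ k ∈ Finset.Ico 1 K,
          (‖m j k‖^2)^2 := by
    rw [← dsum_mul]
    refine Finset.sum_le_sum fun j _ => Finset.sum_le_sum fun k _ => ?_
    have hc : (lam * ((‖w j k‖^2 + ‖v j k‖^2)/2)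
          - ν * ((‖w j k‖^4 + ‖w j k‖^2 * ‖v j k‖^2
              + ‖v j k‖^4)/3)) ≤ lam^2/(4*ν) := by
      have hq := quad_bound lam ν hν (‖w j k‖^2) (‖v j k‖^2)
      calc lam * ((‖w j k‖^2 + ‖v j k‖^2)/2)
          - ν * ((‖w j k‖^4 + ‖w j k‖^2 * ‖v j k‖^2
              + ‖v j k‖^4)/3)
          = lam * ((‖w j k‖^2 + ‖v j k‖^2)/2)
            - ν * (((‖w j k‖^2)^2
                + ‖w j k‖^2 * ‖v j k‖^2
                + (‖v j k‖^2)^2)/3) := by ring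
        _ ≤ lam^2/(4*ν) := hq
    exact mul_le_mul_of_nonneg_right hc (sq_nonneg _)
  have hQ0 : 0 ≤ ∑ j ∈ Finset.Ico 1 J, ∑ k ∈ Finset.Ico 1 K,
      (‖m j k‖^2)^2 :=
    Finset.sum_nonneg fun j _ => Finset.sum_nonneg fun k _ => sq_nonneg _
  -- the mass identity in terms of normP
  have hMass : normP Δx Δy J K 2 w - normP Δx Δy J K 2 v
      = -(2*τ*ε*(Δx*Δy)) * ∑ j ∈ Finset.Ico 1 J, ∑ k ∈ Finset.Ico 1 K,
          (‖m j k‖^2)^2 := by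
    simp only [normP]
    linear_combination (Δx*Δy) * hP2raw
  -- final assembly
  have hco : 0 ≤ 2*ε*(Δx*Δy)*τ := by positivity
  have hstep : (∑ j ∈ Finset.Ico 1 J, ∑ k ∈ Finset.Ico 1 K,
        (delta2 Δx Δy m j k * conj (g j k)).re)
      + (∑ j ∈ Finset.Ico 1 J, ∑ k ∈ Finset.Ico 1 K,
          ((lam * ((‖w j k‖^2 + ‖v j k‖^2)/2)
              - ν * ((‖w j k‖^4 + ‖w j k‖^2 * ‖v j k‖^2
                  + ‖v j k‖^4)/3)) * (‖m j k‖^2)^2))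
      ≤ lam^2/(4*ν) * ∑ j ∈ Finset.Ico 1 J, ∑ k ∈ Finset.Ico 1 K,
          (‖m j k‖^2)^2 := by linarith
  have h2 : energy Δx Δy J K lam ν w - energy Δx Δy J K lam ν v
      ≤ 2*ε*(Δx*Δy)*τ*(lam^2/(4*ν) * ∑ j ∈ Finset.Ico 1 J, ∑ k ∈ Finset.Ico 1 K,
          (‖m j k‖^2)^2) := by
    rw [hE, hA]
    calc 2*ε*(Δx*Δy) * (τ * (∑ j ∈ Finset.Ico 1 J, ∑ k ∈ Finset.Ico 1 K,
            (delta2 Δx Δy m j k * conj (g j k)).re)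
          + τ * (∑ j ∈ Finset.Ico 1 J, ∑ k ∈ Finset.Ico 1 K,
            ((lam * ((‖w j k‖^2 + ‖v j k‖^2)/2)
              - ν * ((‖w j k‖^4 + ‖w j k‖^2 * ‖v j k‖^2
                  + ‖v j k‖^4)/3)) * (‖m j k‖^2)^2)))
        = 2*ε*(Δx*Δy)*τ*((∑ j ∈ Finset.Ico 1 J, ∑ k ∈ Finset.Ico 1 K,
            (delta2 Δx Δy m j k * conj (g j k)).re)
          + (∑ j ∈ Finset.Ico 1 J, ∑ k ∈ Finset.Ico 1 K,
            ((lam * ((‖w j k‖^2 + ‖v j k‖^2)/2)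
              - ν * ((‖w j k‖^4 + ‖w j k‖^2 * ‖v j k‖^2
                  + ‖v j k‖^4)/3)) * (‖m j k‖^2)^2))) := by ring
      _ ≤ 2*ε*(Δx*Δy)*τ*(lam^2/(4*ν) * ∑ j ∈ Finset.Ico 1 J, ∑ k ∈ Finset.Ico 1 K,
            (‖m j k‖^2)^2) := mul_le_mul_of_nonneg_left hstep hco
  have h3 : lam^2/(4*ν) * (normP Δx Δy J K 2 w - normP Δx Δy J K 2 v)
      = -(2*ε*(Δx*Δy)*τ*(lam^2/(4*ν) * ∑ j ∈ Finset.Ico 1 J, ∑ k ∈ Finset.Ico 1 K,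
          (‖m j k‖^2)^2)) := by
    rw [hMass]; ring
  nlinarith [h2, h3]

/-- boundedness of the discrete energy. -/
theorem stmt10 (J K : ℕ) (hJ : 2 ≤ J) (hK : 2 ≤ K) (a b c d : ℝ) (hab : a < b) (hcd : c < d)
    (Δx Δy : ℝ) (hΔx : Δx = (b - a) / J) (hΔy : Δy = (d - c) / K)
    (lam ν ε τ : ℝ) (hν : 0 < ν) (hε : 0 ≤ ε) (hτ : 0 < τ)
    (N : ℕ) (U : ℕ → ℕ → ℕ → ℂ) (hU : isCNFD Δx Δy J K lam ν ε τ N U)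
    (n : ℕ) (hn : n ≤ N) :
    energy Δx Δy J K lam ν (U n) ≤
      energy Δx Δy J K lam ν (U 0) + lam ^ 2 / (4 * ν) * normP Δx Δy J K 2 (U 0) := by
  obtain ⟨hmem, hstep⟩ := hU
  have hJ0 : (0:ℝ) < (J:ℝ) := by exact_mod_cast (by omega : 0 < J)
  have hK0 : (0:ℝ) < (K:ℝ) := by exact_mod_cast (by omega : 0 < K)
  have hΔx0 : 0 < Δx := by rw [hΔx]; exact div_pos (by linarith) hJ0
  have hΔy0 : 0 < Δy := by rw [hΔy]; exact div_pos (by linarith) hK0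
  have hmono : ∀ i, i ≤ N →
      energy Δx Δy J K lam ν (U i) + lam^2/(4*ν) * normP Δx Δy J K 2 (U i)
        ≤ energy Δx Δy J K lam ν (U 0) + lam^2/(4*ν) * normP Δx Δy J K 2 (U 0) := by
    intro i
    induction i with
    | zero => intro _; exact le_refl _
    | succ i ih =>
      intro hi
      have h1 : i ≤ N := by omega
      have hk := key Δx Δy hΔx0 hΔy0 J K hJ hK lam ν ε τ hν hε hτ
        (U (i+1)) (U i) (hmem (i+1) hi) (hmem i h1) (hstep i (by omega))
      exact le_trans hk (ih h1)
  have hfin := hmono n hn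
  have hP2 : 0 ≤ normP Δx Δy J K 2 (U n) := by
    have := mul_nonneg (mul_nonneg hΔx0.le hΔy0.le)
      (Finset.sum_nonneg fun j (_ : j ∈ range J) => Finset.sum_nonneg
        fun k (_ : k ∈ range K) => by positivity :
        (0:ℝ) ≤ ∑ j ∈ range J, ∑ k ∈ range K, ‖U n j k‖ ^ 2)
    simpa [normP] using this
  have hκ : 0 ≤ lam^2/(4*ν) := by positivity
  nlinarith [hfin, mul_nonneg hκ hP2]
end
end

section
/- For every u ∈ X_JK one has Re(⟨δ²u, u·|u|²⟩_h) ≤ 0, where (u·|u|²)_{j,k} = u_{j,k}|u_{j,k}|². -/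
noncomputable section

open Finset Complex ComplexConjugate

lemma key_s12 (z w : ℂ) :
    0 ≤ ((z - w) * conj (z * ((‖z‖ ^ 2 : ℝ) : ℂ) - w * ((‖w‖ ^ 2 : ℝ) : ℂ))).re := by
  rw [Complex.sq_norm, Complex.sq_norm]
  simp only [Complex.normSq_apply, map_sub, map_mul, Complex.conj_ofReal,
    Complex.sub_re, Complex.mul_re, Complex.mul_im, Complex.ofReal_re, Complex.ofReal_im,
    Complex.conj_re, Complex.conj_im, Complex.sub_im]
  nlinarith [sq_nonneg (z.re^2 + z.im^2 - w.re^2 - w.im^2),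
    mul_nonneg (add_nonneg (sq_nonneg (z.re - w.re)) (sq_nonneg (z.im - w.im)))
      (by positivity : (0:ℝ) ≤ z.re^2 + z.im^2 + w.re^2 + w.im^2)]

lemma sbp (n : ℕ) (hn : 1 ≤ n) (f g : ℕ → ℂ)
    (hg0 : g 0 = 0) (hgn : g n = 0) :
    ∑ j ∈ Finset.Icc 1 (n - 1), (f (j + 1) - 2 * f j + f (j - 1)) * conj (g j)
      = -∑ j ∈ Finset.range n, (f (j + 1) - f j) * conj (g (j + 1) - g j) := by
  set A : ℕ → ℂ := fun j => (f (j + 1) - f j) * conj (g j) with hA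
  set B : ℕ → ℂ := fun j => (f (j + 1) - f j) * conj (g (j + 1)) with hB
  have h1 : ∑ j ∈ Finset.Icc 1 (n - 1), (f (j + 1) - 2 * f j + f (j - 1)) * conj (g j)
      = ∑ i ∈ Finset.range (n - 1), (A (i + 1) - B i) := by
    rw [← Finset.Ico_add_one_right_eq_Icc, Nat.sub_add_cancel hn, Finset.sum_Ico_eq_sum_range]
    refine Finset.sum_congr rfl fun i _ => ?_
    have h2 : 1 + i - 1 = i := by omega
    have h3 : 1 + i = i + 1 := by omega
    rw [h2, h3, hA, hB]
    ring
  have h2 : ∑ i ∈ Finset.range (n - 1), A (i + 1) = ∑ i ∈ Finset.range n, A i := by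
    have h := Finset.sum_range_succ' A (n - 1)
    rw [Nat.sub_add_cancel hn] at h
    rw [h, hA]
    simp [hg0]
  have hBn : B (n - 1) = 0 := by
    rw [hB]
    simp only
    rw [Nat.sub_add_cancel hn, hgn]
    simp
  have h3 : ∑ i ∈ Finset.range n, B i = ∑ i ∈ Finset.range (n - 1), B i := by
    have h := Finset.sum_range_succ B (n - 1)
    rw [Nat.sub_add_cancel hn] at h
    rw [h, hBn, add_zero]
  have h4 : ∑ j ∈ Finset.range n, (f (j + 1) - f j) * conj (g (j + 1) - g j)
      = ∑ j ∈ Finset.range n, B j - ∑ j ∈ Finset.range n, A j := by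
    rw [← Finset.sum_sub_distrib]
    refine Finset.sum_congr rfl fun j _ => ?_
    simp only [hA, hB, map_sub]
    ring
  rw [h1, Finset.sum_sub_distrib, h2, h4, h3]
  ring


/-- `Re⟨δ²u, u·|u|²⟩_h ≤ 0` for every `u ∈ X_JK`. -/
theorem stmt12 (J K : ℕ) (hJ : 2 ≤ J) (hK : 2 ≤ K) (a b c d : ℝ) (hab : a < b) (hcd : c < d)
    (Δx Δy : ℝ) (hΔx : Δx = (b - a) / J) (hΔy : Δy = (d - c) / K)
    (u : ℕ → ℕ → ℂ) (hu : memX J K u) :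
    (((Δx * Δy : ℝ) : ℂ) * ∑ j ∈ Finset.Icc 1 (J - 1), ∑ k ∈ Finset.Icc 1 (K - 1),
        delta2 Δx Δy u j k *
          conj (u j k * ((‖u j k‖ ^ 2 : ℝ) : ℂ))).re ≤ 0 := by
  obtain ⟨h0k, hJk, hj0, hjK⟩ := hu
  have hJ1 : 1 ≤ J := by omega
  have hK1 : 1 ≤ K := by omega
  have hJpos : (0:ℝ) < J := by exact_mod_cast Nat.pos_of_ne_zero (by omega)
  have hKpos : (0:ℝ) < K := by exact_mod_cast Nat.pos_of_ne_zero (by omega)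
  have hx : 0 < Δx := by rw [hΔx]; exact div_pos (by linarith) hJpos
  have hy : 0 < Δy := by rw [hΔy]; exact div_pos (by linarith) hKpos
  have hSx : (∑ j ∈ Finset.Icc 1 (J - 1), ∑ k ∈ Finset.Icc 1 (K - 1),
      (u (j + 1) k - 2 * u j k + u (j - 1) k) *
        conj (u j k * ((‖u j k‖ ^ 2 : ℝ) : ℂ))).re ≤ 0 := by
    rw [Finset.sum_comm]
    have h : ∀ k ∈ Finset.Icc 1 (K - 1), ∑ j ∈ Finset.Icc 1 (J - 1),
        (u (j + 1) k - 2 * u j k + u (j - 1) k) *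
          conj (u j k * ((‖u j k‖ ^ 2 : ℝ) : ℂ))
        = -∑ j ∈ Finset.range J, (u (j + 1) k - u j k) *
            conj (u (j + 1) k * ((‖u (j + 1) k‖ ^ 2 : ℝ) : ℂ)
              - u j k * ((‖u j k‖ ^ 2 : ℝ) : ℂ)) := fun k _ =>
      sbp J hJ1 (fun j => u j k)
        (fun j => u j k * ((‖u j k‖ ^ 2 : ℝ) : ℂ))
        (by simp [h0k]) (by simp [hJk])
    rw [Finset.sum_congr rfl h, Finset.sum_neg_distrib, Complex.neg_re, neg_nonpos,
      Complex.re_sum]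
    refine Finset.sum_nonneg fun k _ => ?_
    rw [Complex.re_sum]
    exact Finset.sum_nonneg fun j _ => key_s12 (u (j + 1) k) (u j k)
  have hSy : (∑ j ∈ Finset.Icc 1 (J - 1), ∑ k ∈ Finset.Icc 1 (K - 1),
      (u j (k + 1) - 2 * u j k + u j (k - 1)) *
        conj (u j k * ((‖u j k‖ ^ 2 : ℝ) : ℂ))).re ≤ 0 := by
    have h : ∀ j ∈ Finset.Icc 1 (J - 1), ∑ k ∈ Finset.Icc 1 (K - 1),
        (u j (k + 1) - 2 * u j k + u j (k - 1)) *
          conj (u j k * ((‖u j k‖ ^ 2 : ℝ) : ℂ))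
        = -∑ k ∈ Finset.range K, (u j (k + 1) - u j k) *
            conj (u j (k + 1) * ((‖u j (k + 1)‖ ^ 2 : ℝ) : ℂ)
              - u j k * ((‖u j k‖ ^ 2 : ℝ) : ℂ)) := fun j _ =>
      sbp K hK1 (fun k => u j k)
        (fun k => u j k * ((‖u j k‖ ^ 2 : ℝ) : ℂ))
        (by simp [hj0]) (by simp [hjK])
    rw [Finset.sum_congr rfl h, Finset.sum_neg_distrib, Complex.neg_re, neg_nonpos,
      Complex.re_sum]
    refine Finset.sum_nonneg fun j _ => ?_
    rw [Complex.re_sum]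
    exact Finset.sum_nonneg fun k _ => key_s12 (u j (k + 1)) (u j k)
  have hsplit : (∑ j ∈ Finset.Icc 1 (J - 1), ∑ k ∈ Finset.Icc 1 (K - 1),
        delta2 Δx Δy u j k * conj (u j k * ((‖u j k‖ ^ 2 : ℝ) : ℂ)))
      = (((Δx ^ 2)⁻¹ : ℝ) : ℂ) * ∑ j ∈ Finset.Icc 1 (J - 1), ∑ k ∈ Finset.Icc 1 (K - 1),
          (u (j + 1) k - 2 * u j k + u (j - 1) k) *
            conj (u j k * ((‖u j k‖ ^ 2 : ℝ) : ℂ))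
        + (((Δy ^ 2)⁻¹ : ℝ) : ℂ) * ∑ j ∈ Finset.Icc 1 (J - 1), ∑ k ∈ Finset.Icc 1 (K - 1),
          (u j (k + 1) - 2 * u j k + u j (k - 1)) *
            conj (u j k * ((‖u j k‖ ^ 2 : ℝ) : ℂ)) := by
    rw [Finset.mul_sum, Finset.mul_sum, ← Finset.sum_add_distrib]
    refine Finset.sum_congr rfl fun j _ => ?_
    rw [Finset.mul_sum, Finset.mul_sum, ← Finset.sum_add_distrib]
    refine Finset.sum_congr rfl fun k _ => ?_
    unfold delta2
    push_cast
    ring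
  rw [hsplit, Complex.re_ofReal_mul, Complex.add_re, Complex.re_ofReal_mul,
    Complex.re_ofReal_mul]
  have h1 : (Δx ^ 2)⁻¹ * _ ≤ 0 := mul_nonpos_of_nonneg_of_nonpos (by positivity) hSx
  have h2 : (Δy ^ 2)⁻¹ * _ ≤ 0 := mul_nonpos_of_nonneg_of_nonpos (by positivity) hSy
  have h3 : (0:ℝ) ≤ Δx * Δy := by positivity
  exact mul_nonpos_of_nonneg_of_nonpos h3 (by linarith)
end
end
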